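/- Let γ ∈ (0,1), β > 0 and k ≥ 1 a natural number. Then ∫_0^1 ∫_{y^γ}^1 x^{β/γ − 1} (1−x)^{k−1} dx dy = B(k, β/γ) · B(k + β/γ, 1/γ) / B(β/γ, 1/γ). (Equivalently, the limiting degree distribution μ^ε of the damaged network specializes at ε = 0 to the power-law degree distribution μ of the undamaged network.) -/

import Mathlib

open MeasureTheory Set

/-- The beta function `B(s,t) = ∫_0^1 x^{s-1} (1-x)^{t-1} dx`. -/
noncomputable def betaFn (s t : ℝ) : ℝ :=
  ∫ x in (0 : ℝ)..1, x ^ (s - 1) * (1 - x) ^ (t - 1)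

lemma betaFn_eq_Gamma {s t : ℝ} (hs : 0 < s) (ht : 0 < t) :
    betaFn s t = Real.Gamma s * Real.Gamma t / Real.Gamma (s + t) := by
  have key : ((betaFn s t : ℝ) : ℂ) = Complex.betaIntegral s t := by
    rw [Complex.betaIntegral, betaFn, ← intervalIntegral.integral_ofReal]
    refine intervalIntegral.integral_congr fun x hx => ?_
    rw [Set.uIcc_of_le (by norm_num : (0:ℝ) ≤ 1)] at hx
    have h1 : (0:ℝ) ≤ x := hx.1
    have h2 : (0:ℝ) ≤ 1 - x := by linarith [hx.2]
    rw [Complex.ofReal_mul, Complex.ofReal_cpow h1, Complex.ofReal_cpow h2]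
    push_cast
    ring
  have h := Complex.Gamma_mul_Gamma_eq_betaIntegral
    (s := (s:ℂ)) (t := (t:ℂ)) (by simpa using hs) (by simpa using ht)
  rw [← key, ← Complex.ofReal_add, Complex.Gamma_ofReal, Complex.Gamma_ofReal,
    Complex.Gamma_ofReal, ← Complex.ofReal_mul, ← Complex.ofReal_mul] at h
  have h' : Real.Gamma s * Real.Gamma t = Real.Gamma (s + t) * betaFn s t :=
    Complex.ofReal_inj.mp h
  have hΓ : Real.Gamma (s + t) ≠ 0 := (Real.Gamma_pos_of_pos (by linarith)).ne'
  field_simp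
  linarith [h']

theorem integral_eq_beta_product (γ β : ℝ) (hγ : γ ∈ Set.Ioo (0 : ℝ) 1) (hβ : 0 < β)
    (k : ℕ) (hk : 1 ≤ k) :
    (∫ y in (0 : ℝ)..1, ∫ x in (y ^ γ)..1, x ^ (β / γ - 1) * (1 - x) ^ (k - 1))
      = betaFn k (β / γ) * betaFn (k + β / γ) (1 / γ) / betaFn (β / γ) (1 / γ) := by
  obtain ⟨hγ0, hγ1⟩ := hγ
  set a : ℝ := β / γ with ha_def
  set c : ℝ := 1 / γ with hc_def
  have ha : 0 < a := div_pos hβ hγ0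
  have hc : 0 < c := by positivity
  have hk' : (1:ℝ) ≤ (k:ℝ) := by exact_mod_cast hk
  set f : ℝ → ℝ := fun x => x ^ (a - 1) * (1 - x) ^ (k - 1) with hf_def
  -- measurability / integrability of f
  have hfm : Measurable f := by fun_prop
  have hf_int : IntervalIntegrable f volume 0 1 := by
    apply (intervalIntegral.intervalIntegrable_rpow'
      (by linarith : (-1:ℝ) < a - 1)).mul_continuousOn
    exact Continuous.continuousOn (by continuity)
  set μ : Measure ℝ := volume.restrict (Ioc (0:ℝ) 1) with hμ_def
  have hfμ : Integrable f μ := hf_int.1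
  have hS : MeasurableSet {q : ℝ × ℝ | q.1 ^ γ < q.2} :=
    measurableSet_lt (by fun_prop) measurable_snd
  set F : ℝ → ℝ → ℝ := fun y x =>
    Set.indicator {q : ℝ × ℝ | q.1 ^ γ < q.2} (fun q => f q.2) (y, x) with hF_def
  have hGm : AEStronglyMeasurable (Function.uncurry F) (μ.prod μ) :=
    ((hfm.comp measurable_snd).indicator hS).aestronglyMeasurable
  have hGint : Integrable (Function.uncurry F) (μ.prod μ) := by
    refine Integrable.mono' ((integrable_const (1:ℝ)).mul_prod hfμ) hGm ?_
    have hprod : μ.prod μ = (volume.prod volume).restrict (Ioc (0:ℝ) 1 ×ˢ Ioc (0:ℝ) 1) :=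
      Measure.prod_restrict _ _
    rw [hprod]
    filter_upwards [ae_restrict_mem (measurableSet_Ioc.prod measurableSet_Ioc)] with p hp
    obtain ⟨hp1, hp2⟩ := hp
    have hf0 : 0 ≤ f p.2 :=
      mul_nonneg (Real.rpow_nonneg hp2.1.le _) (pow_nonneg (by linarith [hp2.2]) _)
    have huF : Function.uncurry F p
        = Set.indicator {q : ℝ × ℝ | q.1 ^ γ < q.2} (fun q => f q.2) p := rfl
    rw [Real.norm_eq_abs, huF, one_mul]
    by_cases hmem : p ∈ {q : ℝ × ℝ | q.1 ^ γ < q.2}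
    · rw [Set.indicator_of_mem hmem, abs_of_nonneg hf0]
    · rw [Set.indicator_of_notMem hmem]; simpa using hf0
  -- Step 1: LHS as iterated integral of F
  have step1 : (∫ y in (0:ℝ)..1, ∫ x in (y ^ γ)..1, f x) = ∫ y, ∫ x, F y x ∂μ ∂μ := by
    rw [intervalIntegral.integral_of_le (by norm_num : (0:ℝ) ≤ 1)]
    refine setIntegral_congr_fun measurableSet_Ioc fun y hy => ?_
    have hy0 : 0 < y := hy.1
    have hyγ0 : 0 < y ^ γ := Real.rpow_pos_of_pos hy0 γ
    have hyγ1 : y ^ γ ≤ 1 := Real.rpow_le_one hy0.le hy.2 hγ0.le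
    have e1 : (fun x => F y x) = fun x => Set.indicator (Set.Ioi (y ^ γ)) f x := by
      funext x
      simp only [hF_def, Set.indicator_apply, Set.mem_setOf_eq, Set.mem_Ioi]
    rw [intervalIntegral.integral_of_le hyγ1]
    show _ = ∫ x, F y x ∂μ
    have hset : Set.Ioi (y ^ γ) ∩ Set.Ioc (0:ℝ) 1 = Set.Ioc (y ^ γ) 1 := by
      ext x
      simp only [Set.mem_inter_iff, Set.mem_Ioi, Set.mem_Ioc]
      constructor
      · rintro ⟨h1, _, h3⟩; exact ⟨h1, h3⟩
      · rintro ⟨h1, h2⟩; exact ⟨h1, lt_trans hyγ0 h1, h2⟩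
    rw [e1, integral_indicator measurableSet_Ioi, hμ_def,
      Measure.restrict_restrict measurableSet_Ioi, hset]
  -- Step 2: swap the order of integration
  have step2 : (∫ y, ∫ x, F y x ∂μ ∂μ) = ∫ x, ∫ y, F y x ∂μ ∂μ :=
    MeasureTheory.integral_integral_swap hGint
  -- Step 3: compute the inner integral over y
  have step3 : (∫ x, ∫ y, F y x ∂μ ∂μ) = ∫ x in (0:ℝ)..1, x ^ c * f x := by
    rw [intervalIntegral.integral_of_le (by norm_num : (0:ℝ) ≤ 1)]
    refine setIntegral_congr_fun measurableSet_Ioc fun x hx => ?_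
    have hx0 : 0 < x := hx.1
    have hxc0 : 0 < x ^ c := Real.rpow_pos_of_pos hx0 c
    have hxc1 : x ^ c ≤ 1 := Real.rpow_le_one hx0.le hx.2 hc.le
    have hSy : MeasurableSet {y : ℝ | y ^ γ < x} :=
      measurableSet_lt (by fun_prop) measurable_const
    have e1 : (fun y => F y x) = fun y => Set.indicator {y : ℝ | y ^ γ < x} (fun _ => f x) y := by
      funext y
      simp only [hF_def, Set.indicator_apply, Set.mem_setOf_eq]
    show (∫ y, F y x ∂μ) = _
    rw [e1, integral_indicator hSy, setIntegral_const, hμ_def,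
      Measure.real, Measure.restrict_apply hSy]
    have hset : {y : ℝ | y ^ γ < x} ∩ Ioc (0:ℝ) 1 = Ioo 0 (x ^ c) := by
      ext y
      simp only [Set.mem_inter_iff, Set.mem_setOf_eq, Set.mem_Ioc, Set.mem_Ioo]
      constructor
      · rintro ⟨h1, h2, _⟩
        exact ⟨h2, by
          rw [hc_def, one_div]
          exact (Real.lt_rpow_inv_iff_of_pos h2.le hx0.le hγ0).mpr h1⟩
      · rintro ⟨h1, h2⟩
        refine ⟨?_, h1, le_trans h2.le hxc1⟩
        rw [hc_def, one_div] at h2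
        exact (Real.lt_rpow_inv_iff_of_pos h1.le hx0.le hγ0).mp h2
    rw [hset, Real.volume_Ioo, sub_zero, ENNReal.toReal_ofReal hxc0.le, smul_eq_mul]
  -- Step 4: identify with a beta function value
  have step4 : (∫ x in (0:ℝ)..1, x ^ c * f x) = betaFn (a + c) k := by
    rw [betaFn, intervalIntegral.integral_of_le (by norm_num : (0:ℝ) ≤ 1),
      intervalIntegral.integral_of_le (by norm_num : (0:ℝ) ≤ 1)]
    refine setIntegral_congr_fun measurableSet_Ioc fun x hx => ?_
    have hx0 : 0 < x := hx.1
    have hnp : ((1:ℝ) - x) ^ (k - 1) = (1 - x) ^ ((k:ℝ) - 1) := by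
      rw [show (k:ℝ) - 1 = ((k - 1 : ℕ) : ℝ) by push_cast [hk]; ring,
        Real.rpow_natCast]
    simp only [hf_def]
    rw [hnp, ← mul_assoc, ← Real.rpow_add hx0]
    ring_nf
  -- Assemble and compute with Gamma functions
  have hLHS : (∫ y in (0:ℝ)..1, ∫ x in (y ^ γ)..1, x ^ (a - 1) * (1 - x) ^ (k - 1))
      = betaFn (a + c) k := by
    rw [show (fun y => ∫ x in (y ^ γ)..1, x ^ (a - 1) * (1 - x) ^ (k - 1))
        = fun y => ∫ x in (y ^ γ)..1, f x from rfl]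
    rw [step1, step2, step3, step4]
  rw [hLHS]
  have hka : (0:ℝ) < (k:ℝ) := by linarith
  rw [betaFn_eq_Gamma (by linarith) hka, betaFn_eq_Gamma hka ha,
    betaFn_eq_Gamma (by linarith) hc, betaFn_eq_Gamma ha hc]
  rw [show a + c + (k:ℝ) = (k:ℝ) + a + c by ring]
  have h1 : Real.Gamma ((k:ℝ)) ≠ 0 := (Real.Gamma_pos_of_pos hka).ne'
  have h2 : Real.Gamma a ≠ 0 := (Real.Gamma_pos_of_pos ha).ne'
  have h3 : Real.Gamma c ≠ 0 := (Real.Gamma_pos_of_pos hc).ne'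
  have h4 : Real.Gamma ((k:ℝ) + a) ≠ 0 := (Real.Gamma_pos_of_pos (by linarith)).ne'
  have h5 : Real.Gamma (a + c) ≠ 0 := (Real.Gamma_pos_of_pos (by linarith)).ne'
  have h6 : Real.Gamma ((k:ℝ) + a + c) ≠ 0 := (Real.Gamma_pos_of_pos (by linarith)).ne'
  field_simp
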